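/- Pretty good POVM lemma: Let ρ_A = Σᵢ λᵢ ρ^i_A be a convex mixture of states, and let 𝓐(X) = Σᵢ Pᵢ X Pᵢ ⊗ |i⟩⟨i|_O with 0 < Pᵢ < I and Σᵢ Pᵢ² = I. Define ρ'_{AO} = Σᵢ λᵢ ρ^i_A ⊗ |i⟩⟨i|_O and p_{i|j} = Tr(Pᵢ² ρ^j_A). Then F(ρ'_{AO}, 𝓐(ρ_A)) ≥ (Σᵢ λᵢ p_{i|i})^{3/2}. -/

import Mathlib

open scoped Matrix Kronecker BigOperators ComplexOrder
open Matrix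

noncomputable section

namespace QIT

variable {n : Type*} [Fintype n] [DecidableEq n]

/-- Functional calculus for Hermitian matrices (junk value `0` otherwise). -/
def hcfc (A : Matrix n n ℂ) (f : ℝ → ℝ) : Matrix n n ℂ :=
  if h : A.IsHermitian then
    (h.eigenvectorUnitary : Matrix n n ℂ) * Matrix.diagonal ((↑) ∘ f ∘ h.eigenvalues) *
      (star h.eigenvectorUnitary : Matrix n n ℂ)
  else 0

/-- Positive semidefinite square root (junk otherwise). -/
def msqrt (A : Matrix n n ℂ) : Matrix n n ℂ := hcfc A Real.sqrt

/-- Matrix logarithm on the support (log 0 = 0). -/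
def mlog (A : Matrix n n ℂ) : Matrix n n ℂ := hcfc A Real.log

/-- Trace norm. -/
def traceNorm (A : Matrix n n ℂ) : ℝ := ((msqrt (Aᴴ * A)).trace).re

/-- Fidelity `‖√ρ√σ‖₁`. -/
def fidelity (ρ σ : Matrix n n ℂ) : ℝ := traceNorm (msqrt ρ * msqrt σ)

/-- Purified distance. -/
def purifiedDist (ρ σ : Matrix n n ℂ) : ℝ := Real.sqrt (1 - (fidelity ρ σ) ^ 2)

/-- A density matrix. -/
def IsState (ρ : Matrix n n ℂ) : Prop := ρ.PosSemidef ∧ ρ.trace = 1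

/-- Max-relative entropy (base 2). -/
def Dmax (ρ σ : Matrix n n ℂ) : ℝ := sInf {l : ℝ | ((2 : ℝ) ^ l • σ - ρ).PosSemidef}

/-- Smooth max-relative entropy. -/
def DmaxSmooth (ε : ℝ) (ρ σ : Matrix n n ℂ) : ℝ :=
  sInf {x : ℝ | ∃ ρ' : Matrix n n ℂ, IsState ρ' ∧ purifiedDist ρ' ρ ≤ ε ∧ x = Dmax ρ' σ}

/-- Umegaki relative entropy, in bits. -/
def relEnt (ρ σ : Matrix n n ℂ) : ℝ := ((ρ * (mlog ρ - mlog σ)).trace).re / Real.log 2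

/-- Partial trace over the second factor. -/
def ptraceRight {α β : Type*} [Fintype β] (M : Matrix (α × β) (α × β) ℂ) : Matrix α α ℂ :=
  Matrix.of fun i j => ∑ b, M (i, b) (j, b)

/-- Partial trace over the first factor. -/
def ptraceLeft {α β : Type*} [Fintype α] (M : Matrix (α × β) (α × β) ℂ) : Matrix β β ℂ :=
  Matrix.of fun i j => ∑ a, M (a, i) (a, j)

end QIT

open QIT

namespace PGaux

open QIT
open scoped MatrixOrder

variable {n : Type*} [Fintype n] [DecidableEq n]

lemma hcfc_of_isHermitian {A : Matrix n n ℂ} (hA : A.IsHermitian) (f : ℝ → ℝ) :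
    hcfc A f = (hA.eigenvectorUnitary : Matrix n n ℂ) *
      Matrix.diagonal ((↑) ∘ f ∘ hA.eigenvalues) *
      (star hA.eigenvectorUnitary : Matrix n n ℂ) := dif_pos hA

lemma msqrt_eq_sqrt {A : Matrix n n ℂ} (hA : A.PosSemidef) : msqrt A = CFC.sqrt A := by
  rw [CFC.sqrt_eq_real_sqrt A hA.nonneg, cfcₙ_eq_cfc, hA.1.cfc_eq, msqrt, hcfc, dif_pos hA.1,
    IsHermitian.cfc, Unitary.conjStarAlgAut_apply]; rfl

lemma star_mul_self_unitary {A : Matrix n n ℂ} (hA : A.IsHermitian) :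
    (star hA.eigenvectorUnitary : Matrix n n ℂ) * (hA.eigenvectorUnitary : Matrix n n ℂ) = 1 :=
  Unitary.coe_star_mul_self _

lemma mul_star_self_unitary {A : Matrix n n ℂ} (hA : A.IsHermitian) :
    (hA.eigenvectorUnitary : Matrix n n ℂ) * (star hA.eigenvectorUnitary : Matrix n n ℂ) = 1 :=
  Unitary.coe_mul_star_self _

lemma hcfc_mul {A : Matrix n n ℂ} (hA : A.IsHermitian) (f g : ℝ → ℝ) :
    hcfc A f * hcfc A g = hcfc A (fun x => f x * g x) := by
  rw [hcfc_of_isHermitian hA, hcfc_of_isHermitian hA, hcfc_of_isHermitian hA]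
  have h1 := star_mul_self_unitary hA
  have hd : Matrix.diagonal ((↑) ∘ f ∘ hA.eigenvalues : n → ℂ) *
      Matrix.diagonal ((↑) ∘ g ∘ hA.eigenvalues) =
      Matrix.diagonal ((↑) ∘ (fun x => f x * g x) ∘ hA.eigenvalues) := by
    rw [Matrix.diagonal_mul_diagonal]
    apply congrArg Matrix.diagonal
    funext i
    simp
  calc (hA.eigenvectorUnitary : Matrix n n ℂ) *
        Matrix.diagonal ((↑) ∘ f ∘ hA.eigenvalues) *
        (star hA.eigenvectorUnitary : Matrix n n ℂ) *
        ((hA.eigenvectorUnitary : Matrix n n ℂ) *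
          Matrix.diagonal ((↑) ∘ g ∘ hA.eigenvalues) *
          (star hA.eigenvectorUnitary : Matrix n n ℂ))
      = (hA.eigenvectorUnitary : Matrix n n ℂ) *
        (Matrix.diagonal ((↑) ∘ f ∘ hA.eigenvalues) *
          (((star hA.eigenvectorUnitary : Matrix n n ℂ) *
            (hA.eigenvectorUnitary : Matrix n n ℂ)) *
            Matrix.diagonal ((↑) ∘ g ∘ hA.eigenvalues))) *
        (star hA.eigenvectorUnitary : Matrix n n ℂ) := by
        simp only [mul_assoc]
    _ = _ := by rw [h1, one_mul, hd]

lemma hcfc_trace {A : Matrix n n ℂ} (hA : A.IsHermitian) (f : ℝ → ℝ) :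
    (hcfc A f).trace = ∑ i, (f (hA.eigenvalues i) : ℂ) := by
  rw [hcfc_of_isHermitian hA, Matrix.trace_mul_cycle,
    star_mul_self_unitary hA, one_mul, Matrix.trace_diagonal]
  rfl

lemma hcfc_isHermitian {A : Matrix n n ℂ} (hA : A.IsHermitian) (f : ℝ → ℝ) :
    (hcfc A f).IsHermitian := by
  rw [hcfc_of_isHermitian hA]
  have hd : star (Matrix.diagonal ((↑) ∘ f ∘ hA.eigenvalues : n → ℂ)) =
      Matrix.diagonal ((↑) ∘ f ∘ hA.eigenvalues : n → ℂ) := by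
    rw [Matrix.star_eq_conjTranspose, Matrix.diagonal_conjTranspose]
    apply congrArg Matrix.diagonal
    funext i
    simp [Pi.star_def, Complex.conj_ofReal]
  rw [Matrix.IsHermitian, ← Matrix.star_eq_conjTranspose]
  simp only [StarMul.star_mul, star_star, Unitary.coe_star, hd, mul_assoc]

lemma hcfc_congr {A : Matrix n n ℂ} (hA : A.IsHermitian) {f g : ℝ → ℝ}
    (h : ∀ i, f (hA.eigenvalues i) = g (hA.eigenvalues i)) : hcfc A f = hcfc A g := by
  rw [hcfc_of_isHermitian hA, hcfc_of_isHermitian hA]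
  have he : ((↑) ∘ f ∘ hA.eigenvalues : n → ℂ) = ((↑) ∘ g ∘ hA.eigenvalues) := by
    funext i; simp [Function.comp, h i]
  rw [he]

lemma hcfc_one {A : Matrix n n ℂ} (hA : A.IsHermitian) :
    hcfc A (fun _ => 1) = 1 := by
  rw [hcfc_of_isHermitian hA]
  have : Matrix.diagonal ((↑) ∘ (fun _ : ℝ => (1:ℝ)) ∘ hA.eigenvalues) = (1 : Matrix n n ℂ) := by
    simp [Function.comp_def]
  rw [this, mul_one, mul_star_self_unitary hA]

lemma hcfc_id {A : Matrix n n ℂ} (hA : A.IsHermitian) : hcfc A (fun x => x) = A := by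
  rw [hcfc_of_isHermitian hA]
  exact hA.spectral_theorem.symm

lemma hcfc_posSemidef {A : Matrix n n ℂ} (hA : A.IsHermitian) {f : ℝ → ℝ}
    (hf : ∀ x, 0 ≤ f x) : (hcfc A f).PosSemidef := by
  have h1 : hcfc A f = hcfc A (fun x => Real.sqrt (f x) * Real.sqrt (f x)) :=
    hcfc_congr hA (fun i => (Real.mul_self_sqrt (hf _)).symm)
  rw [h1, ← hcfc_mul hA]
  nth_rewrite 1 [← (hcfc_isHermitian hA (fun x => Real.sqrt (f x))).eq]
  exact Matrix.posSemidef_conjTranspose_mul_self _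

lemma msqrt_posSemidef {A : Matrix n n ℂ} (hA : A.PosSemidef) : (msqrt A).PosSemidef := by
  rw [msqrt_eq_sqrt hA]; exact Matrix.nonneg_iff_posSemidef.mp (CFC.sqrt_nonneg A)

lemma msqrt_mul_self {A : Matrix n n ℂ} (hA : A.PosSemidef) : msqrt A * msqrt A = A := by
  rw [msqrt_eq_sqrt hA]; exact CFC.sqrt_mul_sqrt_self A hA.nonneg

lemma msqrt_herm {A : Matrix n n ℂ} (hA : A.PosSemidef) : (msqrt A).IsHermitian :=
  (msqrt_posSemidef hA).1

lemma eq_msqrt_of_sq_eq {A B : Matrix n n ℂ} (hA : A.PosSemidef) (hB : B.PosSemidef)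
    (h : A * A = B) : A = msqrt B := by
  rw [msqrt_eq_sqrt hB]
  exact (CFC.sqrt_unique h hA.nonneg).symm

lemma msqrt_sq {A : Matrix n n ℂ} (hA : A.PosSemidef) : msqrt (A * A) = A :=
  (eq_msqrt_of_sq_eq hA (by rw [← pow_two]; exact hA.pow 2) rfl).symm

lemma trace_re_nonneg {A : Matrix n n ℂ} (hA : A.PosSemidef) : 0 ≤ A.trace.re := by
  have h : ∀ i, 0 ≤ (A i i).re := by
    intro i
    have h0 := hA.diag_nonneg (i := i)
    rw [Complex.le_def] at h0
    simpa using h0.1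
  rw [Matrix.trace, Complex.re_sum]
  exact Finset.sum_nonneg fun i _ => h i

lemma trace_mul_re_nonneg {A B : Matrix n n ℂ} (hA : A.PosSemidef) (hB : B.PosSemidef) :
    0 ≤ ((A * B).trace).re := by
  have hS := msqrt_herm hA
  have h3 : msqrt A * B * (msqrt A)ᴴ = msqrt A * B * msqrt A := by rw [hS.eq]
  have h4 : (msqrt A * B * msqrt A).PosSemidef :=
    h3 ▸ hB.mul_mul_conjTranspose_same (msqrt A)
  have h5 : (A * B).trace = (msqrt A * B * msqrt A).trace := by
    conv_lhs => rw [← msqrt_mul_self hA]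
    rw [mul_assoc, Matrix.trace_mul_comm]
  rw [h5]
  exact trace_re_nonneg h4

lemma re_trace_hcfc {A : Matrix n n ℂ} (hA : A.IsHermitian) (f : ℝ → ℝ) :
    ((hcfc A f).trace).re = ∑ i, f (hA.eigenvalues i) := by
  rw [hcfc_trace hA, Complex.re_sum]
  simp

lemma tr_msqrt_mono {M N : Matrix n n ℂ} (hM : M.PosSemidef) (hN : N.PosSemidef)
    (hMN : (N - M).PosSemidef) : ((msqrt M).trace).re ≤ ((msqrt N).trace).re := by
  have key : ∀ ε : ℝ, 0 < ε →
      ((msqrt M).trace).re ≤ ((msqrt N).trace).re + (Fintype.card n) * ε := by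
    intro ε hε
    set g : ℝ → ℝ := fun x => Real.sqrt x + ε with hg
    have hgpos : ∀ x : ℝ, 0 < g x := fun x =>
      add_pos_of_nonneg_of_pos (Real.sqrt_nonneg _) hε
    set T : Matrix n n ℂ := hcfc N g with hT
    set Ti : Matrix n n ℂ := hcfc N (fun x => (g x)⁻¹) with hTi
    set Th : Matrix n n ℂ := hcfc N (fun x => Real.sqrt (g x)) with hTh
    set Thi : Matrix n n ℂ := hcfc N (fun x => (Real.sqrt (g x))⁻¹) with hThi
    set S : Matrix n n ℂ := msqrt M with hSdef
    have hSherm : S.IsHermitian := msqrt_herm hM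
    have hThherm : Th.IsHermitian := hcfc_isHermitian hN.1 _
    have hThiherm : Thi.IsHermitian := hcfc_isHermitian hN.1 _
    have hsq : ∀ x : ℝ, Real.sqrt (g x) * Real.sqrt (g x) = g x := fun x =>
      Real.mul_self_sqrt (hgpos x).le
    have hsqne : ∀ x : ℝ, Real.sqrt (g x) ≠ 0 := fun x =>
      (Real.sqrt_pos.mpr (hgpos x)).ne'
    have hThThi : Th * Thi = 1 := by
      rw [hcfc_mul hN.1]
      rw [hcfc_congr hN.1 (g := fun _ => 1) (fun i => mul_inv_cancel₀ (hsqne _))]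
      exact hcfc_one hN.1
    have hThiTh : Thi * Th = 1 := by
      rw [hcfc_mul hN.1]
      rw [hcfc_congr hN.1 (g := fun _ => 1) (fun i => inv_mul_cancel₀ (hsqne _))]
      exact hcfc_one hN.1
    have hThTh : Th * Th = T := by
      rw [hcfc_mul hN.1]
      exact hcfc_congr hN.1 (fun i => hsq _)
    have hThiThi : Thi * Thi = Ti := by
      rw [hcfc_mul hN.1]
      exact hcfc_congr hN.1 (fun i => by rw [← mul_inv, hsq])
    set C : Matrix n n ℂ := Thi * S - Th with hC
    have hCconj : Cᴴ = S * Thi - Th := by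
      rw [hC, Matrix.conjTranspose_sub, Matrix.conjTranspose_mul, hSherm.eq, hThiherm.eq,
        hThherm.eq]
    have e1 : S * Thi * (Thi * S) = S * Ti * S := by
      have : S * Thi * (Thi * S) = S * (Thi * Thi) * S := by simp only [mul_assoc]
      rw [this, hThiThi]
    have e2 : Th * (Thi * S) = S := by rw [← mul_assoc, hThThi, one_mul]
    have e3 : S * Thi * Th = S := by rw [mul_assoc, hThiTh, mul_one]
    have hexp : Cᴴ * C = S * Ti * S - S - (S - T) := by
      rw [hCconj, hC, mul_sub, sub_mul, sub_mul, e1, e2, e3, hThTh]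
    have hCt : 0 ≤ ((Cᴴ * C).trace).re := trace_re_nonneg (Matrix.posSemidef_conjTranspose_mul_self C)
    rw [hexp] at hCt
    have htr : ((S * Ti * S - S - (S - T)).trace).re
        = ((S * Ti * S).trace).re - S.trace.re - (S.trace.re - T.trace.re) := by
      simp [Matrix.trace_sub, Complex.sub_re]
    rw [htr] at hCt
    have hcyc : (S * Ti * S).trace = (M * Ti).trace := by
      rw [Matrix.trace_mul_cycle, hSdef, msqrt_mul_self hM]
    rw [hcyc] at hCt
    -- compare M with N
    have hTiPsd : Ti.PosSemidef := hcfc_posSemidef hN.1 (fun x => inv_nonneg.mpr (hgpos x).le)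
    have hcmp : ((M * Ti).trace).re ≤ ((N * Ti).trace).re := by
      have h0 := trace_mul_re_nonneg hMN hTiPsd
      rw [Matrix.sub_mul, Matrix.trace_sub, Complex.sub_re] at h0
      linarith
    -- spectral computation
    have hNTi : N * Ti = hcfc N (fun x => x * (g x)⁻¹) := by
      conv_lhs => rw [← hcfc_id hN.1]
      rw [hTi, hcfc_mul hN.1]
    have hNTitr : ((N * Ti).trace).re = ∑ i, (hN.1.eigenvalues i) * (g (hN.1.eigenvalues i))⁻¹ := by
      rw [hNTi, re_trace_hcfc hN.1]
    have hTtr : (T.trace).re = ∑ i, g (hN.1.eigenvalues i) := by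
      rw [hT, re_trace_hcfc hN.1]
    have hNtr : ((msqrt N).trace).re = ∑ i, Real.sqrt (hN.1.eigenvalues i) := by
      rw [msqrt, re_trace_hcfc hN.1]
    have hpoint : ∀ i, (hN.1.eigenvalues i) * (g (hN.1.eigenvalues i))⁻¹ + g (hN.1.eigenvalues i)
        ≤ 2 * Real.sqrt (hN.1.eigenvalues i) + ε := by
      intro i
      have hev : 0 ≤ hN.1.eigenvalues i := hN.eigenvalues_nonneg i
      have hs : Real.sqrt (hN.1.eigenvalues i) * Real.sqrt (hN.1.eigenvalues i)
          = hN.1.eigenvalues i := Real.mul_self_sqrt hev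
      have h1 : (hN.1.eigenvalues i) * (g (hN.1.eigenvalues i))⁻¹
          ≤ Real.sqrt (hN.1.eigenvalues i) := by
        rw [← div_eq_mul_inv, div_le_iff₀ (hgpos _)]
        have h2 : g (hN.1.eigenvalues i) = Real.sqrt (hN.1.eigenvalues i) + ε := rfl
        rw [h2]
        nlinarith [Real.sqrt_nonneg (hN.1.eigenvalues i)]
      have h2 : g (hN.1.eigenvalues i) = Real.sqrt (hN.1.eigenvalues i) + ε := rfl
      linarith
    have hsum : ((N * Ti).trace).re + (T.trace).re
        ≤ 2 * ((msqrt N).trace).re + (Fintype.card n) * ε := by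
      rw [hNTitr, hTtr, hNtr, Finset.mul_sum]
      have := Finset.sum_le_sum (fun i (_ : i ∈ Finset.univ) => hpoint i)
      rw [Finset.sum_add_distrib] at this
      simpa [Finset.sum_add_distrib, Finset.card_univ, mul_comm] using this
    have hStr : S.trace.re = ((msqrt M).trace).re := rfl
    have hcard : (0:ℝ) ≤ (Fintype.card n : ℝ) * ε := by positivity
    linarith
  refine le_of_forall_pos_le_add fun ε hε => ?_
  have hc : (0:ℝ) < (Fintype.card n : ℝ) + 1 := by positivity
  have := key (ε / ((Fintype.card n : ℝ) + 1)) (by positivity)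
  have h2 : (Fintype.card n : ℝ) * (ε / ((Fintype.card n : ℝ) + 1)) ≤ ε := by
    rw [mul_div_assoc'] 
    rw [div_le_iff₀ hc]
    nlinarith [Nat.cast_nonneg (α := ℝ) (Fintype.card n)]
  linarith

open Polynomial in
lemma det_smul_one_sub_comm {K : Type*} [Field K] {x : K} (hx : x ≠ 0)
    (A B : Matrix n n K) :
    (x • (1 : Matrix n n K) - A * B).det = (x • (1 : Matrix n n K) - B * A).det := by
  classical
  letI : Invertible (x • (1 : Matrix n n K)) :=
    ⟨x⁻¹ • 1, by simp [smul_smul, inv_mul_cancel₀ hx, mul_inv_cancel₀ hx],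
      by simp [smul_smul, inv_mul_cancel₀ hx, mul_inv_cancel₀ hx]⟩
  haveI : Invertible (1 : Matrix n n K) := invertibleOne
  have hinv : ⅟(x • (1 : Matrix n n K)) = x⁻¹ • (1 : Matrix n n K) :=
    invOf_eq_right_inv (by simp [smul_smul, inv_mul_cancel₀ hx, mul_inv_cancel₀ hx])
  have h1 : (Matrix.fromBlocks (x • (1 : Matrix n n K)) A B (1 : Matrix n n K)).det
      = (x • (1 : Matrix n n K) - A * B).det := by
    rw [Matrix.det_fromBlocks₂₂, Matrix.det_one, one_mul, invOf_one, Matrix.mul_one]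
  have h2 : (Matrix.fromBlocks (x • (1 : Matrix n n K)) A B (1 : Matrix n n K)).det
      = (x • (1 : Matrix n n K) - B * A).det := by
    rw [Matrix.det_fromBlocks₁₁, hinv]
    have e1 : B * (x⁻¹ • (1 : Matrix n n K)) * A = x⁻¹ • (B * A) := by
      rw [mul_smul_comm, Matrix.mul_one, Matrix.smul_mul]
    rw [e1, Matrix.det_smul]
    have e2 : x • (1 : Matrix n n K) - B * A
        = x • ((1 : Matrix n n K) - x⁻¹ • (B * A)) := by
      rw [smul_sub, smul_smul, mul_inv_cancel₀ hx, one_smul]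
    rw [e2, Matrix.det_smul, Matrix.det_one]
    ring
  rw [← h1, h2]

set_option synthInstance.maxHeartbeats 1000000 in
open Polynomial in
lemma charpoly_map_frac (M : Matrix n n ℂ) :
    algebraMap (Polynomial ℂ) (RatFunc ℂ) M.charpoly
      = ((algebraMap (Polynomial ℂ) (RatFunc ℂ) X) • (1 : Matrix n n (RatFunc ℂ))
          - M.map ((algebraMap (Polynomial ℂ) (RatFunc ℂ)).comp (C : ℂ →+* Polynomial ℂ))).det := by
  rw [Matrix.charpoly, RingHom.map_det]
  refine congrArg Matrix.det ?_
  ext i j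
  by_cases h : i = j
  · subst h
    simp [Matrix.charmatrix_apply, Matrix.map_apply, Matrix.smul_apply, Matrix.one_apply,
      map_sub, Matrix.diagonal_apply_eq, smul_eq_mul]
  · simp [Matrix.charmatrix_apply, Matrix.map_apply, Matrix.smul_apply, Matrix.one_apply_ne h,
      map_sub, Matrix.diagonal_apply_ne _ h, smul_eq_mul]

set_option synthInstance.maxHeartbeats 1000000 in
open Polynomial in
lemma charpoly_mul_comm (A B : Matrix n n ℂ) : (A * B).charpoly = (B * A).charpoly := by
  have hinj : Function.Injective (algebraMap (Polynomial ℂ) (RatFunc ℂ)) :=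
    IsFractionRing.injective _ _
  apply hinj
  have hx : (algebraMap (Polynomial ℂ) (RatFunc ℂ)) X ≠ 0 := by
    intro h
    exact Polynomial.X_ne_zero (hinj (h.trans (map_zero _).symm))
  rw [charpoly_map_frac, charpoly_map_frac, Matrix.map_mul, Matrix.map_mul]
  exact det_smul_one_sub_comm hx _ _

open Polynomial in
lemma charpoly_diag (d : n → ℂ) :
    (Matrix.diagonal d).charpoly = ∏ i, (X - C (d i)) := by
  rw [Matrix.charpoly]
  have h : Matrix.charmatrix (Matrix.diagonal d)
      = Matrix.diagonal (fun i => X - C (d i)) := by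
    ext i j
    by_cases h : i = j
    · subst h; simp [Matrix.charmatrix_apply]
    · simp [Matrix.charmatrix_apply, Matrix.diagonal_apply_ne _ h]
  rw [h, Matrix.det_diagonal]

open Polynomial in
lemma charpoly_herm {A : Matrix n n ℂ} (hA : A.IsHermitian) :
    A.charpoly = ∏ i, (X - C ((hA.eigenvalues i : ℂ))) := by
  conv_lhs => rw [hA.spectral_theorem, Unitary.conjStarAlgAut_apply]
  rw [charpoly_mul_comm, ← mul_assoc, star_mul_self_unitary hA, one_mul, charpoly_diag]
  rfl

open Polynomial in
lemma re_tr_msqrt_eq_roots {A : Matrix n n ℂ} (hA : A.PosSemidef) :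
    ((msqrt A).trace).re = ((A.charpoly.roots).map (fun z : ℂ => Real.sqrt z.re)).sum := by
  have hroots : A.charpoly.roots
      = Finset.univ.val.map (fun i => ((hA.1.eigenvalues i : ℂ))) := by
    have hmm : (Finset.univ.val.map fun i => X - C ((hA.1.eigenvalues i : ℂ)))
        = ((Finset.univ.val.map (fun i => ((hA.1.eigenvalues i : ℂ)))).map
            (fun r => X - C r)) := by
      rw [Multiset.map_map]; rfl
    rw [charpoly_herm hA.1, Finset.prod_eq_multiset_prod, hmm]
    exact roots_multiset_prod_X_sub_C _
  rw [hroots, Multiset.map_map, msqrt, re_trace_hcfc hA.1, Finset.sum_eq_multiset_sum]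
  apply congrArg Multiset.sum
  apply Multiset.map_congr rfl
  intro i _
  simp

lemma tr_msqrt_mul_comm {A B : Matrix n n ℂ} (h1 : (A * B).PosSemidef)
    (h2 : (B * A).PosSemidef) :
    ((msqrt (A * B)).trace).re = ((msqrt (B * A)).trace).re := by
  rw [re_tr_msqrt_eq_roots h1, re_tr_msqrt_eq_roots h2, charpoly_mul_comm]

lemma psd_sum {α : Type*} {s : Finset α} {f : α → Matrix n n ℂ}
    (h : ∀ i ∈ s, (f i).PosSemidef) : (∑ i ∈ s, f i).PosSemidef :=
  Finset.sum_induction f _ (fun _ _ ha hb => ha.add hb) Matrix.PosSemidef.zero h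

lemma psd_smul {A : Matrix n n ℂ} (hA : A.PosSemidef) {c : ℝ} (hc : 0 ≤ c) :
    (c • A).PosSemidef := by
  constructor
  · have h1 : (c • A)ᴴ = c • Aᴴ := by
      ext i j
      simp [Matrix.conjTranspose_apply, Matrix.smul_apply, Complex.real_smul, star_mul',
        Complex.conj_ofReal]
    rw [Matrix.IsHermitian, h1, hA.1.eq]
  · exact (hA.smul hc).2

lemma smul_mul_smul_mat {c d : ℝ} (A B : Matrix n n ℂ) :
    (c • A) * (d • B) = (c * d) • (A * B) := by
  rw [Matrix.smul_mul, Matrix.mul_smul, smul_smul]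

lemma msqrt_smul {A : Matrix n n ℂ} (hA : A.PosSemidef) {c : ℝ} (hc : 0 ≤ c) :
    msqrt (c • A) = Real.sqrt c • msqrt A :=
  (eq_msqrt_of_sq_eq (psd_smul (msqrt_posSemidef hA) (Real.sqrt_nonneg c))
    (psd_smul hA hc) (by rw [smul_mul_smul_mat, Real.mul_self_sqrt hc, msqrt_mul_self hA])).symm

lemma trace_smul_re (c : ℝ) (A : Matrix n n ℂ) : ((c • A).trace).re = c * A.trace.re := by
  rw [Matrix.trace_smul]
  simp [Complex.real_smul, Complex.mul_re]

set_option maxHeartbeats 1000000 in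
/-- The per-block fidelity bound. -/
lemma per_block {l : ℝ} (hl : 0 ≤ l) {ρi ρbar Pm : Matrix n n ℂ}
    (hρi : ρi.PosSemidef) (hPm : Pm.PosSemidef) (hPm1 : ((1 : Matrix n n ℂ) - Pm).PosSemidef)
    (hrest : (ρbar - l • ρi).PosSemidef) :
    l * ((Pm * Pm * ρi).trace).re ≤ fidelity (l • ρi) (Pm * ρbar * Pm) := by
  have ha : (l • ρi).PosSemidef := psd_smul hρi hl
  have hbar : ρbar.PosSemidef := by
    have := hrest.add ha
    rwa [sub_add_cancel] at this
  have hb : (Pm * ρbar * Pm).PosSemidef := by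
    have := hbar.mul_mul_conjTranspose_same Pm
    rwa [hPm.1.eq] at this
  set Sa : Matrix n n ℂ := msqrt (l • ρi) with hSa
  set Tb : Matrix n n ℂ := msqrt (Pm * ρbar * Pm) with hTb
  have hSaherm : Sa.IsHermitian := msqrt_herm ha
  have hTbherm : Tb.IsHermitian := msqrt_herm hb
  -- fidelity as trace of sqrt
  have hfid : fidelity (l • ρi) (Pm * ρbar * Pm)
      = ((msqrt ((Tb * Sa) * (Sa * Tb))).trace).re := by
    rw [fidelity, traceNorm, Matrix.conjTranspose_mul, hSaherm.eq, hTbherm.eq, ← mul_assoc]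
  have hpsd1 : ((Tb * Sa) * (Sa * Tb)).PosSemidef := by
    have := Matrix.posSemidef_conjTranspose_mul_self (Sa * Tb)
    rwa [Matrix.conjTranspose_mul, hSaherm.eq, hTbherm.eq] at this
  have hpsd2 : ((Sa * Tb) * (Tb * Sa)).PosSemidef := by
    have := Matrix.posSemidef_conjTranspose_mul_self (Tb * Sa)
    rwa [Matrix.conjTranspose_mul, hSaherm.eq, hTbherm.eq] at this
  have hswap : fidelity (l • ρi) (Pm * ρbar * Pm)
      = ((msqrt (Sa * (Pm * ρbar * Pm) * Sa)).trace).re := by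
    rw [hfid, tr_msqrt_mul_comm hpsd1 hpsd2]
    congr 2
    rw [mul_assoc, ← mul_assoc Tb Tb Sa, hTb, msqrt_mul_self hb, ← mul_assoc]
  -- lower bound matrix
  set R : Matrix n n ℂ := msqrt ρi with hR
  have hRherm : R.IsHermitian := msqrt_herm hρi
  set B0 : Matrix n n ℂ := R * Pm * R with hB0
  have hB0psd : B0.PosSemidef := by
    have := hPm.mul_mul_conjTranspose_same R
    rwa [hRherm.eq] at this
  have hlB0 : (l • B0).PosSemidef := psd_smul hB0psd hl
  have hM0psd : ((l • B0) * (l • B0)).PosSemidef := by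
    rw [← pow_two]; exact hlB0.pow 2
  -- N₀ = l • (R * b * R)
  have hSaR : Sa = Real.sqrt l • R := by rw [hSa, msqrt_smul hρi hl, hR]
  have hN0 : Sa * (Pm * ρbar * Pm) * Sa = l • (R * (Pm * ρbar * Pm) * R) := by
    rw [hSaR, Matrix.smul_mul, Matrix.mul_smul, Matrix.smul_mul, smul_smul,
      Real.mul_self_sqrt hl]
  have hN0psd : (Sa * (Pm * ρbar * Pm) * Sa).PosSemidef := by
    have := hb.mul_mul_conjTranspose_same Sa
    rwa [hSaherm.eq] at this
  -- difference is PSD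
  have hdiffpsd : (Sa * (Pm * ρbar * Pm) * Sa - (l • B0) * (l • B0)).PosSemidef := by
    have hB0sq : B0 * B0 = R * (Pm * ρi * Pm) * R := by
      rw [hB0]
      have : R * Pm * R * (R * Pm * R) = R * Pm * (R * R) * Pm * R := by
        simp only [mul_assoc]
      rw [this, hR, msqrt_mul_self hρi]
      simp only [mul_assoc]
    have hinner : (R * (Pm * (ρbar - l • ρi) * Pm) * R).PosSemidef := by
      have h1 := hrest.mul_mul_conjTranspose_same Pm
      rw [hPm.1.eq] at h1
      have h2 := h1.mul_mul_conjTranspose_same R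
      rwa [hRherm.eq] at h2
    have hexp : Sa * (Pm * ρbar * Pm) * Sa - (l • B0) * (l • B0)
        = l • (R * (Pm * (ρbar - l • ρi) * Pm) * R) := by
      rw [hN0, smul_mul_smul_mat, hB0sq, ← smul_smul]
      rw [← smul_sub]
      congr 1
      rw [Matrix.mul_sub, Matrix.sub_mul, Matrix.mul_sub, Matrix.sub_mul]
      congr 1
      have : Pm * (l • ρi) * Pm = l • (Pm * ρi * Pm) := by
        rw [Matrix.mul_smul, Matrix.smul_mul]
      rw [this, Matrix.mul_smul, Matrix.smul_mul]
    rw [hexp]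
    exact psd_smul hinner hl
  have hmono := tr_msqrt_mono hM0psd hN0psd hdiffpsd
  have hM0tr : ((msqrt ((l • B0) * (l • B0))).trace).re = l * (B0.trace).re := by
    rw [msqrt_sq hlB0, trace_smul_re]
  have hB0tr : (B0.trace).re = ((Pm * ρi).trace).re := by
    rw [hB0, Matrix.trace_mul_cycle, hR, msqrt_mul_self hρi, Matrix.trace_mul_comm]
  -- Pm - Pm² is PSD
  have hPmPm : (Pm - Pm * Pm).PosSemidef := by
    set Q : Matrix n n ℂ := msqrt Pm with hQ
    have hQherm : Q.IsHermitian := msqrt_herm hPm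
    have h1 : (Q * ((1 : Matrix n n ℂ) - Pm) * Q).PosSemidef := by
      have := hPm1.mul_mul_conjTranspose_same Q
      rwa [hQherm.eq] at this
    have hQQ : Q * Q = Pm := msqrt_mul_self hPm
    have e1 : Q * Pm * Q = Pm * Pm := by
      rw [← hQQ]
      simp only [mul_assoc]
    have h2 : Q * ((1 : Matrix n n ℂ) - Pm) * Q = Pm - Pm * Pm := by
      rw [Matrix.mul_sub, Matrix.mul_one, Matrix.sub_mul, hQQ, e1]
    rwa [h2] at h1
  have hstep : ((Pm * Pm * ρi).trace).re ≤ ((Pm * ρi).trace).re := by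
    have h0 := trace_mul_re_nonneg hPmPm hρi
    rw [Matrix.sub_mul, Matrix.trace_sub, Complex.sub_re] at h0
    linarith
  calc l * ((Pm * Pm * ρi).trace).re ≤ l * ((Pm * ρi).trace).re :=
        mul_le_mul_of_nonneg_left hstep hl
    _ = ((msqrt ((l • B0) * (l • B0))).trace).re := by rw [hM0tr, hB0tr]
    _ ≤ ((msqrt (Sa * (Pm * ρbar * Pm) * Sa)).trace).re := hmono
    _ = fidelity (l • ρi) (Pm * ρbar * Pm) := hswap.symm

section Blocks

variable {ι : Type*} [Fintype ι] [DecidableEq ι]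

lemma EE_conjT (i : ι) :
    (Matrix.single i i (1 : ℂ))ᴴ = Matrix.single i i 1 := by
  ext a b
  simp [Matrix.conjTranspose_apply, Matrix.single, apply_ite (star : ℂ → ℂ),
    and_comm]

lemma EE_trace (i : ι) : (Matrix.single i i (1 : ℂ)).trace = 1 := by
  simp [Matrix.trace, Matrix.diag, Matrix.single, Finset.sum_ite_eq]

lemma kron_conjT (A : Matrix n n ℂ) (B : Matrix ι ι ℂ) :
    (A ⊗ₖ B)ᴴ = Aᴴ ⊗ₖ Bᴴ := by
  ext ⟨a, b⟩ ⟨c, d⟩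
  simp [Matrix.conjTranspose_apply, Matrix.kroneckerMap_apply]

lemma kron_E_psd {A : Matrix n n ℂ} (hA : A.PosSemidef) (i : ι) :
    (A ⊗ₖ Matrix.single i i (1 : ℂ)).PosSemidef := by
  have h1 : A ⊗ₖ Matrix.single i i (1 : ℂ)
      = (msqrt A ⊗ₖ Matrix.single i i (1 : ℂ))ᴴ
        * (msqrt A ⊗ₖ Matrix.single i i (1 : ℂ)) := by
    rw [kron_conjT, (msqrt_herm hA).eq, EE_conjT, ← Matrix.mul_kronecker_mul,
      msqrt_mul_self hA, Matrix.single_mul_single_same, one_mul]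
  rw [h1]
  exact Matrix.posSemidef_conjTranspose_mul_self _

lemma sum_kron_E_mul (f g : ι → Matrix n n ℂ) :
    (∑ i, f i ⊗ₖ Matrix.single i i (1 : ℂ))
      * (∑ i, g i ⊗ₖ Matrix.single i i (1 : ℂ))
      = ∑ i, (f i * g i) ⊗ₖ Matrix.single i i (1 : ℂ) := by
  rw [Finset.sum_mul_sum]
  refine Finset.sum_congr rfl fun i _ => ?_
  rw [Finset.sum_eq_single i]
  · rw [← Matrix.mul_kronecker_mul, Matrix.single_mul_single_same, one_mul]
  · intro j _ hj
    have h0 : Matrix.single i i (1 : ℂ) * Matrix.single j j 1 = 0 :=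
      Matrix.single_mul_single_of_ne (h := Ne.symm hj) ..
    rw [← Matrix.mul_kronecker_mul, h0]
    exact Matrix.kronecker_zero _
  · intro h
    exact absurd (Finset.mem_univ i) h

lemma msqrt_block {A : ι → Matrix n n ℂ} (hA : ∀ i, (A i).PosSemidef) :
    msqrt (∑ i, A i ⊗ₖ Matrix.single i i (1 : ℂ))
      = ∑ i, msqrt (A i) ⊗ₖ Matrix.single i i (1 : ℂ) := by
  have hS : (∑ i, msqrt (A i) ⊗ₖ Matrix.single i i (1 : ℂ)).PosSemidef :=
    psd_sum (fun i _ => kron_E_psd (msqrt_posSemidef (hA i)) i)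
  have htot : (∑ i, A i ⊗ₖ Matrix.single i i (1 : ℂ)).PosSemidef :=
    psd_sum (fun i _ => kron_E_psd (hA i) i)
  refine (eq_msqrt_of_sq_eq hS htot ?_).symm
  rw [sum_kron_E_mul]
  exact Finset.sum_congr rfl fun i _ => by rw [msqrt_mul_self (hA i)]

lemma fidelity_block {a b : ι → Matrix n n ℂ} (ha : ∀ i, (a i).PosSemidef)
    (hb : ∀ i, (b i).PosSemidef) :
    fidelity (∑ i, a i ⊗ₖ Matrix.single i i (1 : ℂ))
        (∑ i, b i ⊗ₖ Matrix.single i i (1 : ℂ))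
      = ∑ i, fidelity (a i) (b i) := by
  rw [fidelity, traceNorm, msqrt_block ha, msqrt_block hb, sum_kron_E_mul]
  have hZ : (∑ i, (msqrt (a i) * msqrt (b i)) ⊗ₖ Matrix.single i i (1 : ℂ))ᴴ
      * (∑ i, (msqrt (a i) * msqrt (b i)) ⊗ₖ Matrix.single i i (1 : ℂ))
      = ∑ i, ((msqrt (a i) * msqrt (b i))ᴴ * (msqrt (a i) * msqrt (b i)))
          ⊗ₖ Matrix.single i i (1 : ℂ) := by
    rw [Matrix.conjTranspose_sum]
    have he : ∀ i : ι, ((msqrt (a i) * msqrt (b i)) ⊗ₖ Matrix.single i i (1 : ℂ))ᴴ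
        = (msqrt (a i) * msqrt (b i))ᴴ ⊗ₖ Matrix.single i i (1 : ℂ) := fun i => by
      rw [kron_conjT, EE_conjT]
    rw [Finset.sum_congr rfl fun i _ => he i, sum_kron_E_mul]
  rw [hZ, msqrt_block (fun i => Matrix.posSemidef_conjTranspose_mul_self _),
    Matrix.trace_sum, Complex.re_sum]
  refine Finset.sum_congr rfl fun i _ => ?_
  rw [Matrix.trace_kronecker, EE_trace, mul_one]
  rfl

end Blocks

end PGaux

/-- Pretty good POVM lemma: for `ρ_A = Σᵢ λᵢ ρ^i_A`, `𝓐(X) = Σᵢ Pᵢ X Pᵢ ⊗ |i⟩⟨i|_O`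
with `0 < Pᵢ < I`, `Σᵢ Pᵢ² = I`, and `ρ'_{AO} = Σᵢ λᵢ ρ^i_A ⊗ |i⟩⟨i|_O`,
`p_{i|j} = Tr(Pᵢ² ρ^j_A)`, we have `F(ρ'_{AO}, 𝓐(ρ_A)) ≥ (Σᵢ λᵢ p_{i|i})^{3/2}`. -/
theorem pretty_good_povm {dA ι : Type*} [Fintype dA] [DecidableEq dA]
    [Fintype ι] [DecidableEq ι]
    (lam : ι → ℝ) (hlam : ∀ i, 0 ≤ lam i) (hlam1 : ∑ i, lam i = 1)
    (ρ : ι → Matrix dA dA ℂ) (hρ : ∀ i, IsState (ρ i))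
    (P : ι → Matrix dA dA ℂ)
    (hPpos : ∀ i, (P i).PosDef) (hPlt : ∀ i, ((1 : Matrix dA dA ℂ) - P i).PosDef)
    (hPsum : ∑ i, P i * P i = 1)
    (pc : ι → ι → ℝ) (hpc : ∀ i j, pc i j = ((P i * P i * ρ j).trace).re) :
    fidelity (∑ i, lam i • (ρ i ⊗ₖ Matrix.single i i (1 : ℂ)))
        (∑ i, ((P i * (∑ j, lam j • ρ j) * P i) ⊗ₖ Matrix.single i i (1 : ℂ)))
      ≥ (∑ i, lam i * pc i i) ^ ((3 : ℝ) / 2) := by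
    classical
  set ρbar : Matrix dA dA ℂ := ∑ j, lam j • ρ j with hρbar
  have hapsd : ∀ i, ((lam i • ρ i)).PosSemidef := fun i => PGaux.psd_smul (hρ i).1 (hlam i)
  have hbarpsd : ρbar.PosSemidef := PGaux.psd_sum (fun j _ => hapsd j)
  have hbpsd : ∀ i, (P i * ρbar * P i).PosSemidef := by
    intro i
    have := hbarpsd.mul_mul_conjTranspose_same (P i)
    rwa [(hPpos i).1.eq] at this
  have hL : (∑ i, lam i • (ρ i ⊗ₖ Matrix.single i i (1 : ℂ)))
      = ∑ i, (lam i • ρ i) ⊗ₖ Matrix.single i i (1 : ℂ) :=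
    Finset.sum_congr rfl fun i _ => (Matrix.smul_kronecker _ _ _).symm
  rw [hL, PGaux.fidelity_block hapsd hbpsd]
  have hper : ∀ i, lam i * pc i i ≤ fidelity (lam i • ρ i) (P i * ρbar * P i) := by
    intro i
    rw [hpc i i]
    have hrest : (ρbar - lam i • ρ i).PosSemidef := by
      have he : ρbar - lam i • ρ i = ∑ j ∈ Finset.univ.erase i, lam j • ρ j := by
        rw [hρbar, ← Finset.add_sum_erase _ _ (Finset.mem_univ i), add_sub_cancel_left]
      rw [he]
      exact PGaux.psd_sum (fun j _ => hapsd j)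
    exact PGaux.per_block (hlam i) (hρ i).1 (hPpos i).posSemidef (hPlt i).posSemidef hrest
  have hsum : (∑ i, lam i * pc i i) ≤ ∑ i, fidelity (lam i • ρ i) (P i * ρbar * P i) :=
    Finset.sum_le_sum fun i _ => hper i
  set s : ℝ := ∑ i, lam i * pc i i with hs
  have hpc_nonneg : ∀ i j, 0 ≤ pc i j := by
    intro i j
    rw [hpc]
    have hP2 : (P i * P i).PosSemidef := by
      have := Matrix.posSemidef_conjTranspose_mul_self (P i)
      rwa [(hPpos i).1.eq] at this
    exact PGaux.trace_mul_re_nonneg hP2 (hρ j).1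
  have hs0 : 0 ≤ s := Finset.sum_nonneg fun i _ => mul_nonneg (hlam i) (hpc_nonneg i i)
  have hpc_le : ∀ i, pc i i ≤ 1 := by
    intro i
    have h1 : (((1 : Matrix dA dA ℂ)) * ρ i).trace.re = ∑ j, pc j i := by
      rw [← hPsum, Finset.sum_mul, Matrix.trace_sum, Complex.re_sum]
      exact Finset.sum_congr rfl fun j _ => (hpc j i).symm
    rw [one_mul, (hρ i).2] at h1
    have h2 : pc i i ≤ ∑ j, pc j i :=
      Finset.single_le_sum (fun j _ => hpc_nonneg j i) (Finset.mem_univ i)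
    rw [← h1] at h2
    simpa using h2
  have hs1 : s ≤ 1 := by
    rw [hs, ← hlam1]
    refine Finset.sum_le_sum fun i _ => ?_
    have := mul_le_mul_of_nonneg_left (hpc_le i) (hlam i)
    simpa using this
  have hrpow : s ^ ((3:ℝ)/2) ≤ s := by
    rcases eq_or_lt_of_le hs0 with h | h
    · rw [← h, Real.zero_rpow (by norm_num)]
    · calc s ^ ((3:ℝ)/2) ≤ s ^ (1:ℝ) :=
          Real.rpow_le_rpow_of_exponent_ge h hs1 (by norm_num)
        _ = s := Real.rpow_one s
  exact le_trans hrpow hsum
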